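/- Let f₁ : [0,1] → ℝ be Lipschitz with f₁(0) = 0, decreasing on (0,b₁) and increasing on (b₁,1) for some b₁ ∈ [0,1), let λ₁ : [0,1] → [0,∞) be Lipschitz with λ₁(0) = λ₁(1) = 0 and λ₁ > 0 on (0,1), and set φ₁(u) = ∫₀^u λ₁(s) ds. Let z ∈ (0, f₁(1)) and let κ̄ = max{ν ∈ [0,1] : f₁(ν) = z} (by monotonicity κ̄ is the unique point of (b₁,1) with f₁(κ̄) = z). Then there exists a nonincreasing function y : [0,∞) → [κ̄, 1] with y(0) = 1 which solves the ordinary differential equation (d/dx) φ₁(y(x)) = z − f₁(y(x)) for x > 0, and y(x) → κ̄ as x → +∞. -/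

import Mathlib

open MeasureTheory Set Filter Topology
open scoped ENNReal NNReal

noncomputable section

/-- the ODE connecting `1` to `κ̄` at the interface.
There is a nonincreasing solution `y` on `[0,∞)` of `(φ₁ ∘ y)' = z - f₁(y)`, `y(0) = 1`,
with values in `[κ̄, 1]`, converging to `κ̄` at `+∞`. -/
theorem steady_ode_solution
    (f₁ lam₁ φ₁ : ℝ → ℝ)
    (hf₁lip : ∃ L : ℝ≥0, LipschitzOnWith L f₁ (Icc 0 1)) (hf₁0 : f₁ 0 = 0)
    (b₁ : ℝ) (hb₁ : b₁ ∈ Ico (0:ℝ) 1)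
    (hH1 : StrictAntiOn f₁ (Ioo 0 b₁) ∧ StrictMonoOn f₁ (Ioo b₁ 1))
    (hlamlip : ∃ L : ℝ≥0, LipschitzOnWith L lam₁ (Icc 0 1))
    (hlam0 : lam₁ 0 = 0) (hlam1 : lam₁ 1 = 0)
    (hlampos : ∀ s ∈ Ioo (0:ℝ) 1, 0 < lam₁ s)
    (hφdef : ∀ s : ℝ, φ₁ s = ∫ r in (0:ℝ)..s, lam₁ r)
    (z : ℝ) (hz : 0 < z) (hz' : z < f₁ 1)
    (κ : ℝ) (hκmem : κ ∈ Icc (0:ℝ) 1) (hκval : f₁ κ = z)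
    (hκmax : ∀ ν ∈ Icc (0:ℝ) 1, f₁ ν = z → ν ≤ κ) :
    ∃ y : ℝ → ℝ, AntitoneOn y (Ici 0) ∧ (∀ x ∈ Ici (0:ℝ), y x ∈ Icc κ 1) ∧ y 0 = 1 ∧
      (∀ x > (0:ℝ), HasDerivAt (fun s => φ₁ (y s)) (z - f₁ (y x)) x) ∧
      Tendsto y atTop (𝓝 κ) := by
  classical
  obtain ⟨Lf, hLf⟩ := hf₁lip
  obtain ⟨Lm, hLm⟩ := hlamlip
  have hf₁cont : ContinuousOn f₁ (Icc 0 1) := hLf.continuousOn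
  have hlamcont : ContinuousOn lam₁ (Icc 0 1) := hLm.continuousOn
  have hκ0 : 0 < κ := by
    rcases eq_or_lt_of_le hκmem.1 with h | h
    · exfalso; rw [← h, hf₁0] at hκval; exact hz.ne hκval
    · exact h
  have hκ1 : κ < 1 := by
    rcases eq_or_lt_of_le hκmem.2 with h | h
    · exfalso; rw [h] at hκval; exact hz'.ne' hκval
    · exact h
  -- f₁ > z on (κ, 1]
  have key : ∀ s ∈ Ioc κ (1:ℝ), z < f₁ s := by
    intro s hs
    by_contra h
    push_neg at h
    have hsub : Icc s 1 ⊆ Icc (0:ℝ) 1 :=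
      Icc_subset_Icc (le_of_lt (hκ0.trans hs.1)) le_rfl
    have : z ∈ Icc (f₁ s) (f₁ 1) := ⟨h, hz'.le⟩
    obtain ⟨t, ht, hft⟩ := intermediate_value_Icc hs.2 (hf₁cont.mono hsub) this
    have := hκmax t (hsub ht) hft
    exact absurd (hs.1.trans_le ht.1) (not_lt.2 this)
  -- the integrand g and its properties
  set g : ℝ → ℝ := fun s => lam₁ s / (f₁ s - z) with hgdef
  have hlamnn : ∀ s ∈ Ioc κ (1:ℝ), 0 ≤ lam₁ s := by
    intro s hs
    rcases eq_or_lt_of_le hs.2 with h | h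
    · rw [h, hlam1]
    · exact (hlampos s ⟨hκ0.trans hs.1, h⟩).le
  have hgnn : ∀ s ∈ Ioc κ (1:ℝ), 0 ≤ g s := fun s hs =>
    div_nonneg (hlamnn s hs) (sub_nonneg.2 (key s hs).le)
  have hgpos : ∀ s ∈ Ioo κ (1:ℝ), 0 < g s := fun s hs =>
    div_pos (hlampos s ⟨hκ0.trans hs.1, hs.2⟩) (sub_pos.2 (key s ⟨hs.1, hs.2.le⟩))
  have hgcont : ContinuousOn g (Ioc κ 1) := by
    have hsub : Ioc κ (1:ℝ) ⊆ Icc 0 1 := fun s hs => ⟨(hκ0.trans hs.1).le, hs.2⟩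
    exact (hlamcont.mono hsub).div
      (((hf₁cont.mono hsub).sub continuousOn_const))
      (fun s hs => sub_ne_zero.2 (key s hs).ne')
  have hgint : ∀ u v : ℝ, κ < u → u ≤ v → v ≤ 1 → IntervalIntegrable g volume u v := by
    intro u v hu huv hv1
    apply ContinuousOn.intervalIntegrable
    rw [uIcc_of_le huv]
    exact hgcont.mono (fun s hs => ⟨hu.trans_le hs.1, hs.2.trans hv1⟩)
  set G : ℝ → ℝ := fun u => ∫ s in u..1, g s with hGdef
  have hG1 : G 1 = 0 := intervalIntegral.integral_same
  have hGnn : ∀ u ∈ Ioc κ (1:ℝ), 0 ≤ G u := by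
    intro u hu
    exact intervalIntegral.integral_nonneg hu.2 (fun s hs => hgnn s ⟨hu.1.trans_le hs.1, hs.2⟩)
  have hGsplit : ∀ u v : ℝ, κ < u → u ≤ v → v ≤ 1 → G u = (∫ s in u..v, g s) + G v := by
    intro u v hu huv hv1
    rw [hGdef]
    exact (intervalIntegral.integral_add_adjacent_intervals (hgint u v hu huv hv1)
      (hgint v 1 (hu.trans_le huv) hv1 le_rfl)).symm
  have hGanti : StrictAntiOn G (Ioc κ 1) := by
    intro u hu v hv huv
    have hpos : 0 < ∫ s in u..v, g s := by
      apply intervalIntegral.intervalIntegral_pos_of_pos_on (hgint u v hu.1 huv.le hv.2)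
      · exact fun s hs => hgpos s ⟨hu.1.trans hs.1, hs.2.trans_le hv.2⟩
      · exact huv
    have := hGsplit u v hu.1 huv.le hv.2
    linarith
  have hGinj : InjOn G (Ioc κ 1) := hGanti.injOn
  have hGantimono : AntitoneOn G (Ioc κ 1) := hGanti.antitoneOn
  -- continuity of G
  have hGcontOn : ∀ w : ℝ, κ < w → w ≤ 1 → ContinuousOn G (Icc w 1) := by
    intro w hw hw1
    have hint : IntegrableOn g (uIcc w 1) := by
      rw [uIcc_of_le hw1]
      exact (hgcont.mono (fun s hs => ⟨hw.trans_le hs.1, hs.2⟩)).integrableOn_compact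
        isCompact_Icc
    have hcont := intervalIntegral.continuousOn_primitive_interval hint
    rw [uIcc_of_le hw1] at hcont
    have : ∀ u ∈ Icc w 1, G u = (∫ s in w..1, g s) - ∫ s in w..u, g s := by
      intro u hu
      have := hGsplit w u hw hu.1 hu.2
      have h2 := hGsplit w 1 hw hw1 le_rfl
      rw [hG1, add_zero] at h2
      rw [← h2]
      linarith
    exact (continuousOn_const.sub hcont).congr this
  -- derivative of G
  have hgcontAt : ∀ u ∈ Ioo κ (1:ℝ), ContinuousAt g u := by
    intro u hu
    exact (hgcont.mono Ioo_subset_Ioc_self).continuousAt (Ioo_mem_nhds hu.1 hu.2)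
  have hGderiv : ∀ u ∈ Ioo κ (1:ℝ), HasDerivAt G (-(g u)) u := by
    intro u hu
    set c : ℝ := (κ + 1) / 2 with hc
    have hκc : κ < c := by rw [hc]; linarith
    have hc1 : c < 1 := by rw [hc]; linarith
    have hd : HasDerivAt (fun v => (∫ s in c..1, g s) - ∫ s in c..v, g s) (-(g u)) u := by
      have h1 : HasDerivAt (fun v => ∫ s in c..v, g s) (g u) u := by
        apply intervalIntegral.integral_hasDerivAt_right
        · rcases le_total c u with h | h
          · exact hgint c u hκc h hu.2.le
          · exact (hgint u c hu.1 h hc1.le).symm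
        · exact ContinuousOn.stronglyMeasurableAtFilter isOpen_Ioo
            (hgcont.mono Ioo_subset_Ioc_self) u hu
        · exact hgcontAt u hu
      have h0 := (hasDerivAt_const u (∫ s in c..1, g s)).sub h1
      rw [zero_sub] at h0
      exact h0
    apply hd.congr_of_eventuallyEq
    filter_upwards [Ioo_mem_nhds hu.1 hu.2] with v hv
    have h2 : G c = ∫ s in c..1, g s := rfl
    rcases le_total c v with h | h
    · have := hGsplit c v hκc h hv.2.le
      rw [← h2]; linarith
    · have h3 := hGsplit v c hv.1 h hc1.le
      have h4 : (∫ s in c..v, g s) = -∫ s in v..c, g s := intervalIntegral.integral_symm v c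
      rw [← h2, h4]; linarith
  -- surjectivity of G onto [0, ∞)
  have hex : ∀ x : ℝ, 0 ≤ x → ∃ u, u ∈ Ioc κ 1 ∧ G u = x := by
    intro x hx
    -- a lower bound for lam₁ near κ
    have hlamκ : 0 < lam₁ κ := hlampos κ ⟨hκ0, hκ1⟩
    have hcκ : ContinuousAt lam₁ κ :=
      hlamcont.continuousAt (Icc_mem_nhds hκ0 hκ1)
    obtain ⟨δ, hδ, hδ'⟩ := Metric.continuousAt_iff.1 hcκ (lam₁ κ / 2) (by linarith)
    set c : ℝ := lam₁ κ / 2 with hcdef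
    have hcpos : 0 < c := by positivity
    set κ' : ℝ := min (κ + δ / 2) ((κ + 1) / 2) with hκ'def
    have hκκ' : κ < κ' := lt_min (by linarith) (by linarith)
    have hκ'1 : κ' < 1 := by
      apply (min_le_right _ _).trans_lt; linarith
    have hlamlb : ∀ s ∈ Icc κ κ', c ≤ lam₁ s := by
      intro s hs
      have hd : dist s κ < δ := by
        rw [Real.dist_eq, abs_of_nonneg (sub_nonneg.2 hs.1)]
        have : s ≤ κ + δ / 2 := hs.2.trans (min_le_left _ _)
        linarith
      have := hδ' hd
      rw [Real.dist_eq, abs_lt] at this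
      linarith [this.1]
    set L : ℝ := max (Lf : ℝ) 1 with hLdef
    have hLpos : (0:ℝ) < L := lt_of_lt_of_le one_pos (le_max_right _ _)
    have hfub : ∀ s ∈ Ioc κ κ', f₁ s - z ≤ L * (s - κ) := by
      intro s hs
      have hsmem : s ∈ Icc (0:ℝ) 1 := ⟨(hκ0.trans hs.1).le, hs.2.trans hκ'1.le⟩
      have hκmem' : κ ∈ Icc (0:ℝ) 1 := hκmem
      have := hLf.dist_le_mul s hsmem κ hκmem'
      rw [Real.dist_eq, Real.dist_eq, abs_of_nonneg (sub_nonneg.2 hs.1.le)] at this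
      calc f₁ s - z = f₁ s - f₁ κ := by rw [hκval]
        _ ≤ |f₁ s - f₁ κ| := le_abs_self _
        _ ≤ (Lf : ℝ) * (s - κ) := this
        _ ≤ L * (s - κ) := by
            apply mul_le_mul_of_nonneg_right (le_max_left _ _) (sub_nonneg.2 hs.1.le)
    -- the comparison function
    have hglb : ∀ s ∈ Ioc κ κ', c / L * (s - κ)⁻¹ ≤ g s := by
      intro s hs
      have h1 : 0 < f₁ s - z := sub_pos.2 (key s ⟨hs.1, hs.2.trans hκ'1.le⟩)
      have h2 : 0 < s - κ := sub_pos.2 hs.1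
      have heq : c / L * (s - κ)⁻¹ = c / (L * (s - κ)) := by
        field_simp
      rw [heq, hgdef]
      exact div_le_div₀ (hlamnn s ⟨hs.1, hs.2.trans hκ'1.le⟩)
        (hlamlb s ⟨hs.1.le, hs.2⟩) h1 (hfub s hs)
    -- choose w close to κ
    set w : ℝ := κ + (κ' - κ) * Real.exp (-(L / c) * (x + 1)) with hwdef
    have hexp1 : Real.exp (-(L / c) * (x + 1)) < 1 := by
      rw [Real.exp_lt_one_iff]
      have : 0 < L / c := div_pos hLpos hcpos
      nlinarith
    have hexp0 : 0 < Real.exp (-(L / c) * (x + 1)) := Real.exp_pos _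
    have hκw : κ < w := by
      rw [hwdef]; nlinarith
    have hwκ' : w < κ' := by
      rw [hwdef]; nlinarith
    -- the comparison integral
    have hcompint : ∀ u v : ℝ, κ < u → u ≤ v →
        IntervalIntegrable (fun s => c / L * (s - κ)⁻¹) volume u v := by
      intro u v hu huv
      apply ContinuousOn.intervalIntegrable
      apply ContinuousOn.mul continuousOn_const
      apply ContinuousOn.inv₀ (by fun_prop)
      intro s hs
      rw [uIcc_of_le huv] at hs
      have : κ < s := hu.trans_le hs.1
      exact sub_ne_zero.2 this.ne'
    have hcomp : (∫ s in w..κ', c / L * (s - κ)⁻¹) ≤ ∫ s in w..κ', g s := by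
      apply intervalIntegral.integral_mono_on hwκ'.le (hcompint w κ' hκw hwκ'.le)
        (hgint w κ' hκw hwκ'.le hκ'1.le)
      intro s hs
      exact hglb s ⟨hκw.trans_le hs.1, hs.2⟩
    have hcalc : (∫ s in w..κ', c / L * (s - κ)⁻¹) = x + 1 := by
      rw [intervalIntegral.integral_const_mul]
      have h1 : (∫ s in w..κ', (s - κ)⁻¹) = ∫ s in (w - κ)..(κ' - κ), s⁻¹ := by
        rw [← intervalIntegral.integral_comp_sub_right (fun s => s⁻¹) κ]
      rw [h1, integral_inv]
      · have hwκpos : 0 < w - κ := sub_pos.2 hκw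
        have hκ'κ : κ' - κ ≠ 0 := (sub_pos.2 hκκ').ne'
        have hwκeq : w - κ = (κ' - κ) * Real.exp (-(L / c) * (x + 1)) := by
          rw [hwdef]; ring
        have : (κ' - κ) / (w - κ) = Real.exp (L / c * (x + 1)) := by
          rw [hwκeq, div_mul_eq_div_div, div_self hκ'κ, one_div, ← Real.exp_neg]
          congr 1; ring
        rw [this, Real.log_exp]
        field_simp
      · intro h
        rw [uIcc_of_le (by linarith : w - κ ≤ κ' - κ)] at h
        have := h.1
        linarith [sub_pos.2 hκw]
    have hGwx : x < G w := by
      have h1 : G w = (∫ s in w..κ', g s) + G κ' :=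
        hGsplit w κ' hκw hwκ'.le hκ'1.le
      have h2 : 0 ≤ G κ' := hGnn κ' ⟨hκκ', hκ'1.le⟩
      nlinarith [hcomp, hcalc.symm.le]
    -- intermediate value theorem
    have hsub : Icc (G 1) (G w) ⊆ G '' Icc w 1 :=
      intermediate_value_Icc' (by linarith : w ≤ 1) (hGcontOn w hκw (by linarith))
    obtain ⟨u, hu, hGu⟩ := hsub ⟨by rw [hG1]; exact hx, hGwx.le⟩
    exact ⟨u, ⟨hκw.trans_le hu.1, hu.2⟩, hGu⟩
  -- define y as the inverse of G
  set y : ℝ → ℝ := fun x => if hx : 0 ≤ x then (hex x hx).choose else 1 with hydef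
  have hyspec : ∀ x : ℝ, 0 ≤ x → y x ∈ Ioc κ 1 ∧ G (y x) = x := by
    intro x hx
    rw [hydef]
    simp only [dif_pos hx]
    exact (hex x hx).choose_spec
  have hy0 : y 0 = 1 := by
    have h := hyspec 0 le_rfl
    apply hGinj h.1 ⟨hκ1, le_rfl⟩
    rw [h.2, hG1]
  have hanti : AntitoneOn y (Ici 0) := by
    intro a ha b hb hab
    by_contra h
    push_neg at h
    have := hGanti (hyspec a ha).1 (hyspec b hb).1 h
    rw [(hyspec a ha).2, (hyspec b hb).2] at this
    exact absurd hab (not_le.2 this)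
  have hmem : ∀ x ∈ Ici (0:ℝ), y x ∈ Icc κ 1 := fun x hx =>
    ⟨(hyspec x hx).1.1.le, (hyspec x hx).1.2⟩
  have hyoo : ∀ x : ℝ, 0 < x → y x ∈ Ioo κ 1 := by
    intro x hx
    refine ⟨(hyspec x hx.le).1.1, lt_of_le_of_ne (hyspec x hx.le).1.2 ?_⟩
    intro h
    have := (hyspec x hx.le).2
    rw [h, hG1] at this
    exact hx.ne this
  -- continuity of y on (0, ∞)
  have hycont : ∀ x : ℝ, 0 < x → ContinuousAt y x := by
    intro x hx
    rw [Metric.continuousAt_iff]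
    intro ε hε
    obtain ⟨hyκ, hy1⟩ := hyoo x hx
    set a : ℝ := max (y x - ε / 2) ((κ + y x) / 2) with hadef
    set b : ℝ := min (y x + ε / 2) ((y x + 1) / 2) with hbdef
    have haκ : κ < a := lt_of_lt_of_le (by linarith) (le_max_right _ _)
    have hayx : a < y x := max_lt (by linarith) (by linarith)
    have hyxb : y x < b := lt_min (by linarith) (by linarith)
    have hb1 : b < 1 := (min_le_right _ _).trans_lt (by linarith)
    have hamem : a ∈ Ioc κ (1:ℝ) := ⟨haκ, by linarith⟩
    have hbmem : b ∈ Ioc κ (1:ℝ) := ⟨by linarith, hb1.le⟩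
    have hGb : G b < x := by
      have := hGanti (hyoo x hx |> fun h => ⟨h.1, h.2.le⟩) hbmem hyxb
      rwa [(hyspec x hx.le).2] at this
    have hGa : x < G a := by
      have := hGanti hamem ⟨hyκ, hy1.le⟩ hayx
      rwa [(hyspec x hx.le).2] at this
    refine ⟨min (x - G b) (G a - x), lt_min (by linarith) (by linarith), ?_⟩
    intro t ht
    rw [Real.dist_eq] at ht
    have ht1 : G b < t := by
      have := abs_lt.1 ht
      have h2 := min_le_left (x - G b) (G a - x)
      linarith [this.1]
    have ht2 : t < G a := by
      have := abs_lt.1 ht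
      have h2 := min_le_right (x - G b) (G a - x)
      linarith [this.2]
    have ht0 : 0 ≤ t := le_of_lt (lt_of_le_of_lt (hGnn b hbmem) ht1)
    have hyt := hyspec t ht0
    have hytb : y t < b := by
      by_contra h
      push_neg at h
      have := hGantimono hbmem hyt.1 h
      rw [hyt.2] at this
      exact absurd ht1 (not_lt.2 this)
    have hyta : a < y t := by
      by_contra h
      push_neg at h
      have := hGantimono hyt.1 hamem h
      rw [hyt.2] at this
      exact absurd ht2 (not_lt.2 this)
    rw [Real.dist_eq, abs_lt]
    constructor
    · have : y x - ε / 2 ≤ a := le_max_left _ _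
      linarith
    · have : b ≤ y x + ε / 2 := min_le_left _ _
      linarith
  -- derivative of y
  have hyderiv : ∀ x : ℝ, 0 < x → HasDerivAt y (-(g (y x)))⁻¹ x := by
    intro x hx
    have hyx := hyoo x hx
    have hgyx : 0 < g (y x) := hgpos _ hyx
    apply HasDerivAt.of_local_left_inverse (hycont x hx) (hGderiv (y x) hyx)
      (by simpa using hgyx.ne')
    filter_upwards [Ioi_mem_nhds hx] with t ht
    exact (hyspec t (le_of_lt ht)).2
  -- derivative of φ₁
  have hφeq : φ₁ = fun s => ∫ r in (0:ℝ)..s, lam₁ r := funext hφdef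
  have hφderiv : ∀ u ∈ Ioo (0:ℝ) 1, HasDerivAt φ₁ (lam₁ u) u := by
    intro u hu
    rw [hφeq]
    apply intervalIntegral.integral_hasDerivAt_right
    · apply ContinuousOn.intervalIntegrable
      rw [uIcc_of_le hu.1.le]
      exact hlamcont.mono (Icc_subset_Icc le_rfl hu.2.le)
    · exact ContinuousOn.stronglyMeasurableAtFilter isOpen_Ioo
        (hlamcont.mono Ioo_subset_Icc_self) u hu
    · exact (hlamcont.mono Ioo_subset_Icc_self).continuousAt (Ioo_mem_nhds hu.1 hu.2)
  -- the composed derivative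
  have hderiv : ∀ x > (0:ℝ), HasDerivAt (fun s => φ₁ (y s)) (z - f₁ (y x)) x := by
    intro x hx
    have hyx := hyoo x hx
    have hyx01 : y x ∈ Ioo (0:ℝ) 1 := ⟨hκ0.trans hyx.1, hyx.2⟩
    have h := (hφderiv (y x) hyx01).comp x (hyderiv x hx)
    refine HasDerivAt.congr_deriv h ?_
    have hlamne : lam₁ (y x) ≠ 0 := (hlampos _ hyx01).ne'
    have hfz : f₁ (y x) - z ≠ 0 := sub_ne_zero.2 (key _ ⟨hyx.1, hyx.2.le⟩).ne'
    show lam₁ (y x) * (-(lam₁ (y x) / (f₁ (y x) - z)))⁻¹ = z - f₁ (y x)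
    have hc : lam₁ (y x) * ((f₁ (y x) - z) / lam₁ (y x)) = f₁ (y x) - z := by
      field_simp
    rw [inv_neg, inv_div, mul_neg, hc]
    ring
  -- convergence at infinity
  have htends : Tendsto y atTop (𝓝 κ) := by
    rw [Metric.tendsto_atTop]
    intro ε hε
    set u : ℝ := min (κ + ε / 2) ((κ + 1) / 2) with hudef
    have hκu : κ < u := lt_min (by linarith) (by linarith)
    have hu1 : u < 1 := (min_le_right _ _).trans_lt (by linarith)
    refine ⟨max (G u + 1) 1, fun t ht => ?_⟩
    have ht1 : G u + 1 ≤ t := (le_max_left _ _).trans ht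
    have ht0 : (0:ℝ) < t := lt_of_lt_of_le one_pos ((le_max_right _ _).trans ht)
    have hyt := hyspec t ht0.le
    have hytu : y t < u := by
      by_contra h
      push_neg at h
      have := hGantimono ⟨hκu, hu1.le⟩ hyt.1 h
      rw [hyt.2] at this
      linarith
    rw [Real.dist_eq, abs_of_nonneg (sub_nonneg.2 hyt.1.1.le)]
    have : u ≤ κ + ε / 2 := min_le_left _ _
    linarith
  exact ⟨y, hanti, hmem, hy0, hderiv, htends⟩
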